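/- Let n and k be integers with 0 ≤ k ≤ n/2. The number of subsets G = {s₁ < s₂ < ... < s_j} of [n] = {1,2,...,n} such that j ≤ k and sᵢ ≥ 2i for every 1 ≤ i ≤ j (including the empty set) equals the binomial coefficient C(n, k). -/

import Mathlib

open scoped Classical

/-- `G ⊆ {1,…,n}` is a ballot set of size at most `k`: if the elements of `G`
in increasing order are `s₁ < s₂ < … < s_j`, then `j ≤ k` and `sᵢ ≥ 2i`
for every `1 ≤ i ≤ j`. -/
def IsBallotSet (k : ℕ) (G : Finset ℕ) : Prop :=
  G.card ≤ k ∧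
    ∀ i < (G.sort (· ≤ ·)).length, 2 * (i + 1) ≤ (G.sort (· ≤ ·)).getD i 0

private lemma sort_insert_max {a : ℕ} {G : Finset ℕ} (ha : ∀ x ∈ G, x < a) :
    (insert a G).sort (· ≤ ·) = G.sort (· ≤ ·) ++ [a] := by
  have hna : a ∉ G := fun h => lt_irrefl a (ha a h)
  have hnd : (G.sort (· ≤ ·) ++ [a]).Nodup := by
    refine List.Nodup.append (G.sort_nodup _) (List.nodup_singleton a) ?_
    intro x hx hx'
    simp only [List.mem_singleton] at hx'
    subst hx'
    exact hna ((Finset.mem_sort _).1 hx)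
  have hsorted : (G.sort (· ≤ ·) ++ [a]).Pairwise (· ≤ ·) := by
    rw [List.pairwise_append]
    refine ⟨G.pairwise_sort _, List.pairwise_singleton _ _, ?_⟩
    intro x hx y hy
    simp only [List.mem_singleton] at hy
    subst hy
    exact (ha x ((Finset.mem_sort _).1 hx)).le
  have htf : (G.sort (· ≤ ·) ++ [a]).toFinset = insert a G := by
    ext x
    simp [Finset.mem_sort (α := ℕ) (· ≤ ·), or_comm]
  conv_lhs => rw [← htf]
  exact (List.toFinset_sort _ hnd).2 hsorted

/-- Every element of a ballot set is at least twice the number of elements. -/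
private lemma two_mul_card_le {k n : ℕ} {G : Finset ℕ} (hG : G ⊆ Finset.Icc 1 n)
    (hB : IsBallotSet k G) : 2 * G.card ≤ n := by
  rcases Nat.eq_zero_or_pos G.card with h0 | h0
  · omega
  · have hlen : G.card - 1 < (G.sort (· ≤ ·)).length := by
      rw [Finset.length_sort]; omega
    have h2 := hB.2 (G.card - 1) hlen
    rw [List.getD_eq_getElem _ _ hlen] at h2
    have hmem : (G.sort (· ≤ ·))[G.card - 1] ∈ G :=
      (Finset.mem_sort _).1 (List.getElem_mem hlen)
    have := (Finset.mem_Icc.1 (hG hmem)).2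
    omega

/-- Inserting the new maximum `n+1` into a ballot set. -/
private lemma ballot_insert_iff {k n : ℕ} {G : Finset ℕ} (hG : G ⊆ Finset.Icc 1 n)
    (hk : 2 * (k + 1) ≤ n + 1) :
    IsBallotSet (k + 1) (insert (n + 1) G) ↔ IsBallotSet k G := by
  have hlt : ∀ x ∈ G, x < n + 1 := by
    intro x hx
    have := (Finset.mem_Icc.1 (hG hx)).2
    omega
  have hna : (n + 1) ∉ G := fun h => lt_irrefl _ (hlt _ h)
  have hsort := sort_insert_max hlt
  have hcard : (insert (n + 1) G).card = G.card + 1 := Finset.card_insert_of_notMem hna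
  have hlen : (G.sort (· ≤ ·)).length = G.card := Finset.length_sort _
  constructor
  · rintro ⟨h1, h2⟩
    refine ⟨by omega, ?_⟩
    intro i hi
    have hi' : i < ((insert (n + 1) G).sort (· ≤ ·)).length := by
      rw [hsort, List.length_append]; omega
    have := h2 i hi'
    rwa [hsort, List.getD_append _ _ _ _ (by omega)] at this
  · rintro ⟨h1, h2⟩
    refine ⟨by omega, ?_⟩
    intro i hi
    rw [hsort, List.length_append] at hi
    simp only [List.length_singleton] at hi
    rw [hsort]
    rcases lt_or_ge i (G.sort (· ≤ ·)).length with hlt' | hge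
    · rw [List.getD_append _ _ _ _ hlt']
      exact h2 i hlt'
    · have : i = (G.sort (· ≤ ·)).length := by omega
      subst this
      rw [List.getD_append_right _ _ _ _ le_rfl]
      rw [Nat.sub_self]
      simp only [List.getD_cons_zero]
      omega

private lemma ballot_zero_iff (G : Finset ℕ) : IsBallotSet 0 G ↔ G = ∅ := by
  constructor
  · rintro ⟨h1, _⟩
    exact Finset.card_eq_zero.1 (Nat.le_zero.1 h1)
  · rintro rfl
    exact ⟨le_rfl, by simp⟩

theorem stmt_7 (n k : ℕ) (h : 2 * k ≤ n) :
    ((Finset.Icc 1 n).powerset.filter (fun G => IsBallotSet k G)).card =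
      Nat.choose n k := by
  induction n generalizing k with
  | zero =>
    have hk : k = 0 := by omega
    subst hk
    have : (Finset.Icc 1 0).powerset.filter (fun G => IsBallotSet 0 G) = {∅} := by
      ext G
      simp [ballot_zero_iff]
    rw [this]
    simp
  | succ n ih =>
    cases k with
    | zero =>
      have : (Finset.Icc 1 (n + 1)).powerset.filter (fun G => IsBallotSet 0 G) = {∅} := by
        ext G
        simp [ballot_zero_iff]
        rintro rfl
        simp
      rw [this]
      simp
    | succ k =>
      -- split on whether n+1 ∈ G
      set S := (Finset.Icc 1 (n + 1)).powerset.filter (fun G => IsBallotSet (k + 1) G) with hS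
      have hsplit : S.card = (S.filter (fun G => (n + 1) ∈ G)).card
          + (S.filter (fun G => (n + 1) ∉ G)).card := by
        rw [← Finset.card_union_of_disjoint (Finset.disjoint_filter_filter_not _ _ _),
          Finset.filter_union_filter_not_eq]
      -- part 1: sets containing n+1, bijective to ballot sets of Icc 1 n with bound k
      have h1 : (S.filter (fun G => (n + 1) ∈ G)).card
          = ((Finset.Icc 1 n).powerset.filter (fun G => IsBallotSet k G)).card := by
        refine (Finset.card_bij (fun G _ => insert (n + 1) G) ?_ ?_ ?_).symm
        · intro G hG
          simp only [Finset.mem_filter, Finset.mem_powerset] at hG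
          rw [hS]
          simp only [Finset.mem_filter, Finset.mem_powerset]
          obtain ⟨hsub, hB⟩ := hG
          refine ⟨⟨?_, (ballot_insert_iff hsub h).2 hB⟩, Finset.mem_insert_self _ _⟩
          intro x hx
          rcases Finset.mem_insert.1 hx with rfl | hx'
          · simp
          · have := Finset.mem_Icc.1 (hsub hx'); exact Finset.mem_Icc.2 (by omega)
        · intro G₁ hG₁ G₂ hG₂ heq
          simp only [Finset.mem_filter, Finset.mem_powerset] at hG₁ hG₂
          have hn₁ : (n + 1) ∉ G₁ := fun hx => by
            have := (Finset.mem_Icc.1 (hG₁.1 hx)).2; omega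
          have hn₂ : (n + 1) ∉ G₂ := fun hx => by
            have := (Finset.mem_Icc.1 (hG₂.1 hx)).2; omega
          have := congrArg (fun s => Finset.erase s (n + 1)) heq
          simpa [Finset.erase_insert hn₁, Finset.erase_insert hn₂] using this
        · intro G hG
          simp only [Finset.mem_filter, Finset.mem_powerset, hS] at hG
          obtain ⟨⟨hsub, hB⟩, hmem⟩ := hG
          refine ⟨G.erase (n + 1), ?_, ?_⟩
          · simp only [Finset.mem_filter, Finset.mem_powerset]
            have hsub' : G.erase (n + 1) ⊆ Finset.Icc 1 n := by
              intro x hx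
              have hxG := Finset.mem_of_mem_erase hx
              have hxne := Finset.ne_of_mem_erase hx
              have := Finset.mem_Icc.1 (hsub hxG)
              exact Finset.mem_Icc.2 (by omega)
            refine ⟨hsub', (ballot_insert_iff hsub' h).1 ?_⟩
            rwa [Finset.insert_erase hmem]
          · exact Finset.insert_erase hmem
      -- part 2: sets not containing n+1 = ballot sets of Icc 1 n with bound k+1
      have h2 : S.filter (fun G => (n + 1) ∉ G)
          = (Finset.Icc 1 n).powerset.filter (fun G => IsBallotSet (k + 1) G) := by
        ext G
        simp only [hS, Finset.filter_filter, Finset.mem_filter, Finset.mem_powerset]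
        constructor
        · rintro ⟨hsub, hB, hn⟩
          refine ⟨?_, hB⟩
          intro x hx
          have := Finset.mem_Icc.1 (hsub hx)
          have : x ≠ n + 1 := fun hh => hn (hh ▸ hx)
          have := Finset.mem_Icc.1 (hsub hx)
          exact Finset.mem_Icc.2 (by omega)
        · rintro ⟨hsub, hB⟩
          refine ⟨fun x hx => ?_, hB, fun hx => by
            have := (Finset.mem_Icc.1 (hsub hx)).2; omega⟩
          have := Finset.mem_Icc.1 (hsub hx)
          exact Finset.mem_Icc.2 (by omega)
      rw [hsplit, h1, h2, ih k (by omega)]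
      rcases lt_or_ge (2 * (k + 1)) (n + 1) with hlt | hge
      · rw [ih (k + 1) (by omega)]
        rw [Nat.choose_succ_succ, Nat.add_comm]
      · -- n + 1 = 2 * (k + 1), i.e. n = 2k + 1
        have hn : n = 2 * k + 1 := by omega
        have heq : (Finset.Icc 1 n).powerset.filter (fun G => IsBallotSet (k + 1) G)
            = (Finset.Icc 1 n).powerset.filter (fun G => IsBallotSet k G) := by
          ext G
          simp only [Finset.mem_filter, Finset.mem_powerset]
          constructor
          · rintro ⟨hsub, hB⟩
            refine ⟨hsub, ?_, hB.2⟩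
            have := two_mul_card_le hsub hB
            omega
          · rintro ⟨hsub, hB⟩
            exact ⟨hsub, hB.1.trans (by omega), hB.2⟩
        rw [heq, ih k (by omega)]
        subst hn
        have h1' : Nat.choose (2 * k + 1) k = Nat.choose (2 * k + 1) (k + 1) := by
          have := Nat.choose_symm (n := 2 * k + 1) (k := k + 1) (by omega)
          have hh : 2 * k + 1 - (k + 1) = k := by omega
          rw [hh] at this
          omega
        have := Nat.choose_succ_succ (2 * k + 1) k
        simp only [Nat.succ_eq_add_one] at this
        omega
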